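/- Let $r$ be an odd prime, and let $t, h$ be positive integers with $2h \le t$. Let $\beta$ be an integer coprime to $r$ whose multiplicative order modulo $r^t$ is $r^h$. Then $\Psi_{r^h}(\beta) \equiv r^h \pmod{r^t}$, where $\Psi_{r^h}(\beta) = 1 + \beta + \cdots + \beta^{r^h - 1}$. -/

import Mathlib

/-- Binomial-style expansion: `(1+m)^i ≡ 1 + i*m` modulo `m^2`. -/
lemma one_add_pow_modeq (m : ℤ) : ∀ i : ℕ, (m ^ 2) ∣ ((1 + (i : ℤ) * m) - (1 + m) ^ i) := by
  intro i
  induction i with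
  | zero => simp
  | succ i ih =>
    obtain ⟨k, hk⟩ := ih
    refine ⟨k * (1 + m) - i, ?_⟩
    have h1 : (1 + m) ^ i = (1 + (i : ℤ) * m) - m ^ 2 * k := by linarith
    have h2 : (1 + m) ^ (i + 1) = (1 + m) ^ i * (1 + m) := by ring
    rw [h2, h1]
    push_cast
    ring

theorem stmt_6 (r t h : ℕ) (hr : r.Prime) (hrodd : Odd r) (ht : 0 < t) (hh : 0 < h)
    (h2h : 2 * h ≤ t) (β : ℤ) (hcop : Int.gcd β r = 1)
    (hord : orderOf (β : ZMod (r ^ t)) = r ^ h) :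
    (∑ i ∈ Finset.range (r ^ h), β ^ i) ≡ (r : ℤ) ^ h [ZMOD (r : ℤ) ^ t] := by
  have hr1 : 1 < r := hr.one_lt
  have hht : h ≤ t := by omega
  -- β^(r^h) ≡ 1 mod r^t
  have hpow : ((r : ℤ) ^ t) ∣ β ^ (r ^ h) - 1 := by
    have h1 : (β : ZMod (r ^ t)) ^ (r ^ h) = 1 := by
      rw [← hord]; exact pow_orderOf_eq_one _
    have h2 : ((β ^ (r ^ h) - 1 : ℤ) : ZMod (r ^ t)) = 0 := by push_cast [h1]; ring
    have := (ZMod.intCast_zmod_eq_zero_iff_dvd (β ^ (r ^ h) - 1) (r ^ t)).mp h2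
    exact_mod_cast this
  -- r does not divide β
  have hndvd : ¬ (r : ℤ) ∣ β := by
    intro hd
    have h1 : (r : ℤ) ∣ Int.gcd β r := Int.dvd_coe_gcd hd dvd_rfl
    rw [hcop] at h1
    have : (r : ℤ) ≤ 1 := Int.le_of_dvd one_pos h1
    omega
  -- β ≡ 1 mod r
  have hb1 : (r : ℤ) ∣ β - 1 := by
    haveI : Fact r.Prime := ⟨hr⟩
    have hx0 : (β : ZMod r) ≠ 0 := fun h0 =>
      hndvd ((ZMod.intCast_zmod_eq_zero_iff_dvd β r).mp h0)
    have hdvd1 : orderOf (β : ZMod r) ∣ r ^ h := by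
      apply orderOf_dvd_of_pow_eq_one
      have hrr : (r : ℤ) ∣ (r : ℤ) ^ t := dvd_pow_self _ ht.ne'
      have h1 : (r : ℤ) ∣ β ^ (r ^ h) - 1 := hrr.trans hpow
      have h2 := (ZMod.intCast_zmod_eq_zero_iff_dvd (β ^ (r ^ h) - 1) r).mpr h1
      push_cast at h2
      rw [sub_eq_zero] at h2
      exact_mod_cast h2
    have hdvd2 : orderOf (β : ZMod r) ∣ r - 1 :=
      orderOf_dvd_of_pow_eq_one (ZMod.pow_card_sub_one_eq_one hx0)
    have hco : Nat.Coprime (r ^ h) (r - 1) :=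
      Nat.Coprime.pow_left _ (hr.coprime_iff_not_dvd.mpr (fun hdv => by
        have := Nat.le_of_dvd (by omega) hdv; omega))
    have h1 : orderOf (β : ZMod r) ∣ 1 := (Nat.dvd_gcd hdvd1 hdvd2).trans hco.dvd
    have hx1 : (β : ZMod r) = 1 := orderOf_eq_one_iff.mp (Nat.eq_one_of_dvd_one h1)
    have h2 : (β : ZMod r) = ((1 : ℤ) : ZMod r) := by simpa using hx1
    have h3 := Int.ModEq.dvd ((ZMod.intCast_eq_intCast_iff' _ _ _).mp h2)
    simpa [neg_sub] using dvd_neg.mpr h3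
  -- Lifting the exponent: r^(t-h) ∣ β - 1
  have hkey : ((r : ℤ) ^ (t - h)) ∣ β - 1 := by
    have hlte := Int.emultiplicity_pow_sub_pow hr hrodd (x := β) (y := 1)
      (by simpa using hb1) hndvd (r ^ h)
    rw [one_pow, emultiplicity_pow_self_of_prime hr.prime] at hlte
    apply pow_dvd_of_le_emultiplicity
    have h1 : (t : ℕ∞) ≤ emultiplicity (r : ℤ) (β ^ (r ^ h) - 1) :=
      le_emultiplicity_of_pow_dvd hpow
    rw [hlte] at h1
    cases hm : emultiplicity (r : ℤ) (β - 1) with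
    | top => exact le_top
    | coe k =>
      rw [hm] at h1
      have h2 : (t : ℕ∞) ≤ ((k + h : ℕ) : ℕ∞) := by push_cast; exact h1
      have h3 := Nat.cast_le.mp h2
      exact_mod_cast Nat.cast_le.mpr (by omega : t - h ≤ k)
  obtain ⟨d, hd⟩ := hkey
  set m : ℤ := β - 1 with hm
  have hβ : β = 1 + m := by ring
  have hmsq : ((r : ℤ) ^ t) ∣ m ^ 2 := by
    have h1 : ((r : ℤ) ^ t) ∣ ((r : ℤ) ^ (t - h)) ^ 2 := by
      rw [← pow_mul]; exact pow_dvd_pow _ (by omega)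
    exact h1.trans ⟨d ^ 2, by rw [hd]; ring⟩
  set n : ℕ := r ^ h with hn
  have hn1 : 1 ≤ n := Nat.one_le_pow _ _ (by omega)
  have hncast : (n : ℤ) = (r : ℤ) ^ h := by push_cast [hn]; ring
  set S : ℤ := ∑ i ∈ Finset.range n, (i : ℤ) with hS
  -- r^t ∣ m * S
  have hmS : ((r : ℤ) ^ t) ∣ m * S := by
    have h2S : 2 * S = (n : ℤ) * ((n : ℤ) - 1) := by
      have hg := congrArg (fun x : ℕ => (x : ℤ)) (Finset.sum_range_id_mul_two n)
      push_cast [Nat.cast_sub hn1] at hg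
      simp only [hS]
      linarith
    have hth : t - h + h = t := by omega
    have hpp : ((r : ℤ)) ^ (t - h) * (r : ℤ) ^ h = (r : ℤ) ^ t := by
      rw [← pow_add, hth]
    have hmn : m * (n : ℤ) = d * (r : ℤ) ^ t := by
      rw [hncast, hd]; linear_combination d * hpp
    have hdvd2 : ((r : ℤ) ^ t) ∣ 2 * (m * S) := by
      refine ⟨d * ((n : ℤ) - 1), ?_⟩
      have hr2 : 2 * (m * S) = m * (2 * S) := by ring
      rw [hr2, h2S, ← mul_assoc, hmn]
      ring
    have hcop2 : IsCoprime ((r : ℤ) ^ t) 2 := by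
      apply IsCoprime.pow_left
      rw [Int.isCoprime_iff_gcd_eq_one]
      exact hrodd.coprime_two_right
    exact hcop2.dvd_of_dvd_mul_left hdvd2
  -- terms
  have hterm : ((r : ℤ) ^ t) ∣ ∑ i ∈ Finset.range n, (β ^ i - (1 + (i : ℤ) * m)) := by
    apply Finset.dvd_sum
    intro i _
    refine hmsq.trans ?_
    have h1 := one_add_pow_modeq m i
    rw [← hβ] at h1
    simpa [neg_sub] using dvd_neg.mpr h1
  -- conclude
  have hsplit : (∑ i ∈ Finset.range n, β ^ i) - (r : ℤ) ^ h
      = (∑ i ∈ Finset.range n, (β ^ i - (1 + (i : ℤ) * m))) + m * S := by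
    rw [Finset.sum_sub_distrib, Finset.sum_add_distrib, Finset.sum_const, Finset.card_range]
    rw [nsmul_eq_mul, mul_one, hncast, hS, Finset.mul_sum]
    have hc : ∑ x ∈ Finset.range n, (x : ℤ) * m = ∑ i ∈ Finset.range n, m * (i : ℤ) := by
      apply Finset.sum_congr rfl; intros; ring
    rw [hc]
    ring
  have hfinal : ((r : ℤ) ^ t) ∣ (∑ i ∈ Finset.range n, β ^ i) - (r : ℤ) ^ h := by
    rw [hsplit]; exact dvd_add hterm hmS
  exact (Int.modEq_iff_dvd.mpr hfinal).symm
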